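/- Let G be a symmetric n×n integer matrix. Suppose φ : ℂ × ℂⁿ → ℂ is holomorphic on Ω = {(τ,z) : Im τ > 0}, is not identically zero on Ω, and satisfies, for all x, y ∈ ℤⁿ and all (τ,z) ∈ Ω, the elliptic transformation law φ(τ, z + τ·x + y) · exp(πi·τ·xᵀGx + 2πi·xᵀGz) = exp(πi·(x+y)ᵀG(x+y)) · φ(τ, z). Then G, viewed as a real matrix, is positive semidefinite (i.e. vᵀGv ≥ 0 for all v ∈ ℝⁿ). -/

import Mathlib

open Matrix Filter Complex

lemma quad_cast_C {n : ℕ} (G : Matrix (Fin n) (Fin n) ℤ) (x : Fin n → ℤ) :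
    (fun i => (x i : ℂ)) ⬝ᵥ (G.map (Int.cast : ℤ → ℂ)).mulVec (fun i => (x i : ℂ))
      = ((x ⬝ᵥ G.mulVec x : ℤ) : ℂ) := by
  simp [dotProduct, Matrix.mulVec, Matrix.map_apply, Finset.mul_sum]

lemma quad_cast_R {n : ℕ} (G : Matrix (Fin n) (Fin n) ℤ) (x : Fin n → ℤ) :
    (fun i => (x i : ℝ)) ⬝ᵥ (G.map (Int.cast : ℤ → ℝ)).mulVec (fun i => (x i : ℝ))
      = ((x ⬝ᵥ G.mulVec x : ℤ) : ℝ) := by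
  simp [dotProduct, Matrix.mulVec, Matrix.map_apply, Finset.mul_sum]

theorem posSemidef_of_elliptic_transformation
    {n : ℕ} (G : Matrix (Fin n) (Fin n) ℤ) (hG : G.IsSymm)
    (φ : ℂ × (Fin n → ℂ) → ℂ)
    (hol : DifferentiableOn ℂ φ {p : ℂ × (Fin n → ℂ) | 0 < p.1.im})
    (hne : ∃ p : ℂ × (Fin n → ℂ), 0 < p.1.im ∧ φ p ≠ 0)
    (hell : ∀ (x y : Fin n → ℤ) (τ : ℂ) (z : Fin n → ℂ), 0 < τ.im →
      φ (τ, z + τ • (fun i => (x i : ℂ)) + (fun i => (y i : ℂ))) *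
          Complex.exp ((Real.pi : ℂ) * Complex.I * τ * (((x ⬝ᵥ G.mulVec x) : ℤ) : ℂ)
            + 2 * (Real.pi : ℂ) * Complex.I *
              ((fun i => (x i : ℂ)) ⬝ᵥ (G.map (Int.cast : ℤ → ℂ)).mulVec z)) =
        Complex.exp ((Real.pi : ℂ) * Complex.I *
            ((((x + y) ⬝ᵥ G.mulVec (x + y)) : ℤ) : ℂ)) * φ (τ, z)) :
    ∀ v : Fin n → ℝ, 0 ≤ v ⬝ᵥ (G.map (Int.cast : ℤ → ℝ)).mulVec v := by
  classical
  -- Step 1: nonnegativity on integer vectors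
  have key : ∀ x : Fin n → ℤ, 0 ≤ x ⬝ᵥ G.mulVec x := by
    intro x
    by_contra hx
    push_neg at hx
    obtain ⟨⟨τ, z₀⟩, hτ, hφ⟩ := hne
    have ht : (0:ℝ) < τ.im := hτ
    set q : ℤ := x ⬝ᵥ G.mulVec x with hqdef
    set xc : Fin n → ℂ := fun i => (x i : ℂ) with hxc
    set Gc : Matrix (Fin n) (Fin n) ℂ := G.map (Int.cast : ℤ → ℂ) with hGcdef
    set g : ℂ → ℂ := fun w => φ (τ, z₀ + w • xc) with hgdef
    have hq1 : xc ⬝ᵥ Gc.mulVec xc = (q : ℂ) := quad_cast_C G x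
    have hopen : IsOpen {p : ℂ × (Fin n → ℂ) | 0 < p.1.im} :=
      isOpen_lt continuous_const (Complex.continuous_im.comp continuous_fst)
    have hg : Differentiable ℂ g := by
      intro w
      have hψ : Differentiable ℂ (fun w : ℂ => ((τ, z₀ + w • xc) : ℂ × (Fin n → ℂ))) := by
        apply Differentiable.prodMk (differentiable_const _)
        exact (differentiable_id.smul_const xc).const_add z₀
      have hmem : ((τ, z₀ + w • xc) : ℂ × (Fin n → ℂ)) ∈ {p : ℂ × (Fin n → ℂ) | 0 < p.1.im} := ht
      exact (hol.differentiableAt (hopen.mem_nhds hmem)).comp w (hψ w)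
    have h0c : (fun i : Fin n => (((0 : Fin n → ℤ)) i : ℂ)) = (0 : Fin n → ℂ) := by
      funext i; simp
    -- period 1
    have hA1 : ∀ w : ℂ, ‖g (w + 1)‖ = ‖g w‖ := by
      intro w
      have h := hell 0 x τ (z₀ + w • xc) hτ
      rw [h0c] at h
      simp only [smul_zero, add_zero, zero_dotProduct, Matrix.mulVec_zero, dotProduct_zero,
        Int.cast_zero, mul_zero, zero_add, Complex.exp_zero, mul_one] at h
      rw [← hxc, ← hqdef] at h
      have harg : z₀ + (w + 1) • xc = z₀ + w • xc + xc := by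
        rw [add_smul, one_smul, add_assoc]
      have hgw : g (w + 1) = Complex.exp ((Real.pi : ℂ) * Complex.I * (q : ℂ)) *
          φ (τ, z₀ + w • xc) := by
        rw [hgdef]; simp only; rw [harg]; exact h
      rw [hgw, norm_mul, Complex.norm_exp]
      have hre : ((Real.pi : ℂ) * Complex.I * (q : ℂ)).re = 0 := by
        simp [Complex.mul_re, Complex.mul_im]
      rw [hre, Real.exp_zero, one_mul]
    -- quasi-period τ
    set c1 : ℝ := (xc ⬝ᵥ Gc.mulVec z₀).im with hc1def
    set qr : ℝ := (q : ℝ) with hqrdef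
    have hqr : qr < 0 := by rw [hqrdef]; exact_mod_cast hx
    set t : ℝ := τ.im with htdef
    set cA : ℝ := Real.pi * qr * t + 2 * Real.pi * c1 with hcAdef
    set cB : ℝ := 2 * Real.pi * qr with hcBdef
    have hBτ : ∀ w : ℂ, ‖g (w + τ)‖ =
        ‖g w‖ * Real.exp (cA + cB * w.im) := by
      intro w
      have h := hell x 0 τ (z₀ + w • xc) hτ
      rw [h0c] at h
      simp only [add_zero] at h
      rw [← hxc, ← hqdef] at h
      have hd : xc ⬝ᵥ Gc.mulVec (z₀ + w • xc) = xc ⬝ᵥ Gc.mulVec z₀ + w * (q : ℂ) := by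
        rw [Matrix.mulVec_add, dotProduct_add, Matrix.mulVec_smul, dotProduct_smul, hq1,
          smul_eq_mul]
      have habs := congrArg (‖·‖) h
      rw [norm_mul, norm_mul, Complex.norm_exp, Complex.norm_exp] at habs
      have hre1 : ((Real.pi : ℂ) * Complex.I * (q : ℂ)).re = 0 := by
        simp [Complex.mul_re, Complex.mul_im]
      have hre2 : ((Real.pi : ℂ) * Complex.I * τ * (q : ℂ)
          + 2 * (Real.pi : ℂ) * Complex.I * (xc ⬝ᵥ Gc.mulVec (z₀ + w • xc))).re
          = -(cA + cB * w.im) := by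
        rw [hd]
        simp only [Complex.add_re, Complex.mul_re, Complex.mul_im, Complex.I_re,
          Complex.I_im, Complex.ofReal_re, Complex.ofReal_im, Complex.intCast_re,
          Complex.intCast_im, Complex.add_im, Complex.re_ofNat, Complex.im_ofNat]
        rw [hcAdef, hcBdef, hc1def, hqrdef, htdef]
        push_cast
        ring
      rw [hre1, Real.exp_zero, one_mul, hre2] at habs
      have harg : z₀ + (w + τ) • xc = z₀ + w • xc + τ • xc := by
        rw [add_smul, add_assoc]
      have hgw : ‖g (w + τ)‖ = ‖φ (τ, z₀ + w • xc + τ • xc)‖ := by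
        rw [hgdef]; simp only; rw [harg]
      rw [hgw]
      have hgw2 : ‖φ (τ, z₀ + w • xc)‖ = ‖g w‖ := rfl
      rw [hgw2] at habs
      calc ‖φ (τ, z₀ + w • xc + τ • xc)‖
          = ‖φ (τ, z₀ + w • xc + τ • xc)‖ *
              Real.exp (-(cA + cB * w.im)) * Real.exp (cA + cB * w.im) := by
            rw [mul_assoc, ← Real.exp_add, neg_add_cancel, Real.exp_zero, mul_one]
        _ = ‖g w‖ * Real.exp (cA + cB * w.im) := by rw [habs]
    -- the doubly periodic majorant
    set γ : ℝ := Real.pi * (-qr) / t with hγdef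
    have hγ : 0 < γ := div_pos (mul_pos Real.pi_pos (neg_pos.mpr hqr)) ht
    set δ : ℝ := -(cA + γ * t ^ 2) / t with hδdef
    set H : ℂ → ℝ := fun w => ‖g w‖ * Real.exp (γ * w.im ^ 2 + δ * w.im)
      with hHdef
    have hH1 : ∀ w : ℂ, H (w + 1) = H w := by
      intro w
      rw [hHdef]; simp only
      rw [hA1 w]
      norm_num [Complex.add_im]
    have hHτ : ∀ w : ℂ, H (w + τ) = H w := by
      intro w
      rw [hHdef]; simp only
      rw [hBτ w, Complex.add_im, mul_assoc, ← Real.exp_add]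
      congr 1
      have htne : t ≠ 0 := ne_of_gt ht
      rw [hγdef, hδdef] at *
      rw [hcBdef]
      rw [← htdef]
      field_simp
      ring
    have hHm : ∀ (m : ℤ) (w : ℂ), H (w + (m : ℂ)) = H w := by
      intro m
      induction m using Int.induction_on with
      | zero => intro w; simp
      | succ i ih =>
          intro w
          have e : w + (((i : ℤ) + 1 : ℤ) : ℂ) = (w + ((i : ℤ) : ℂ)) + 1 := by
            push_cast; ring
          rw [e, hH1, ih]
      | pred i ih =>
          intro w
          have e : w + ((-(i : ℤ) - 1 : ℤ) : ℂ) + 1 = w + ((-(i : ℤ) : ℤ) : ℂ) := by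
            push_cast; ring
          rw [← ih w]
          calc H (w + ((-(i : ℤ) - 1 : ℤ) : ℂ))
              = H (w + ((-(i : ℤ) - 1 : ℤ) : ℂ) + 1) := (hH1 _).symm
            _ = H (w + ((-(i : ℤ) : ℤ) : ℂ)) := by rw [e]
    have hHk : ∀ (k : ℤ) (w : ℂ), H (w + (k : ℂ) * τ) = H w := by
      intro k
      induction k using Int.induction_on with
      | zero => intro w; simp
      | succ i ih =>
          intro w
          have e : w + (((i : ℤ) + 1 : ℤ) : ℂ) * τ = (w + ((i : ℤ) : ℂ) * τ) + τ := by
            push_cast; ring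
          rw [e, hHτ, ih]
      | pred i ih =>
          intro w
          have e : w + ((-(i : ℤ) - 1 : ℤ) : ℂ) * τ + τ = w + ((-(i : ℤ) : ℤ) : ℂ) * τ := by
            push_cast; ring
          rw [← ih w]
          calc H (w + ((-(i : ℤ) - 1 : ℤ) : ℂ) * τ)
              = H (w + ((-(i : ℤ) - 1 : ℤ) : ℂ) * τ + τ) := (hHτ _).symm
            _ = H (w + ((-(i : ℤ) : ℤ) : ℂ) * τ) := by rw [e]
    -- compact fundamental domain
    set K : Set ℂ := (fun p : ℝ × ℝ => (p.1 : ℂ) + (p.2 : ℂ) * Complex.I) ''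
      (Set.Icc (0:ℝ) 1 ×ˢ Set.Icc (0:ℝ) t) with hKdef
    have hKcpt : IsCompact K := by
      apply (isCompact_Icc.prod isCompact_Icc).image
      exact (Complex.continuous_ofReal.comp continuous_fst).add
        ((Complex.continuous_ofReal.comp continuous_snd).mul continuous_const)
    have hKne : K.Nonempty := by
      refine ⟨(0:ℂ), ⟨(0, 0), ⟨?_, ?_⟩, by simp⟩⟩
      · exact ⟨le_refl 0, zero_le_one⟩
      · exact ⟨le_refl 0, le_of_lt ht⟩
    have hHcont : Continuous H := by
      rw [hHdef]
      apply (continuous_norm.comp hg.continuous).mul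
      apply Real.continuous_exp.comp
      exact (continuous_const.mul ((Complex.continuous_im.pow 2))).add
        (continuous_const.mul Complex.continuous_im)
    obtain ⟨u₀, hu₀K, hmax⟩ := hKcpt.exists_isMaxOn hKne hHcont.continuousOn
    set C : ℝ := H u₀ with hCdef
    have hC0 : 0 ≤ C := mul_nonneg (norm_nonneg _) (Real.exp_pos _).le
    have hHC : ∀ w : ℂ, H w ≤ C := by
      intro w
      set k : ℤ := ⌊w.im / t⌋ with hkdef
      set u1 : ℂ := w - (k : ℂ) * τ with hu1def
      have him : u1.im = w.im - (k : ℝ) * t := by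
        rw [hu1def]
        simp [Complex.sub_im, Complex.mul_im, htdef]
      have h0le : 0 ≤ u1.im := by
        rw [him]
        have : (k : ℝ) ≤ w.im / t := Int.floor_le _
        have := (le_div_iff₀ ht).mp this
        linarith
      have hle : u1.im ≤ t := by
        rw [him]
        have : w.im / t < (k : ℝ) + 1 := Int.lt_floor_add_one _
        have := (div_lt_iff₀ ht).mp this
        nlinarith
      set m : ℤ := ⌊u1.re⌋ with hmdef
      set u : ℂ := u1 - (m : ℂ) with hudef
      have hure : 0 ≤ u.re ∧ u.re ≤ 1 := by
        constructor
        · simp only [hudef, Complex.sub_re, Complex.intCast_re]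
          have := Int.floor_le u1.re
          linarith
        · simp only [hudef, Complex.sub_re, Complex.intCast_re]
          have := Int.lt_floor_add_one u1.re
          linarith
      have huim : u.im = u1.im := by
        simp [hudef, Complex.sub_im]
      have huK : u ∈ K := by
        refine ⟨(u.re, u.im), ⟨⟨hure.1, hure.2⟩, ⟨?_, ?_⟩⟩, Complex.re_add_im u⟩
        · rw [huim]; exact h0le
        · rw [huim]; exact hle
      have hw : w = u + (m : ℂ) + (k : ℂ) * τ := by
        rw [hudef, hu1def]; ring
      calc H w = H (u + (m : ℂ) + (k : ℂ) * τ) := by rw [← hw]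
        _ = H (u + (m : ℂ)) := hHk k (u + (m : ℂ))
        _ = H u := hHm m u
        _ ≤ C := hmax huK
    -- bound for g
    have hbd2 : ∀ w : ℂ, ‖g w‖ ≤ C * Real.exp (-(γ * w.im ^ 2 + δ * w.im)) := by
      intro w
      have : ‖g w‖ = H w * Real.exp (-(γ * w.im ^ 2 + δ * w.im)) := by
        rw [hHdef]; simp only
        rw [mul_assoc, ← Real.exp_add, add_neg_cancel, Real.exp_zero, mul_one]
      rw [this]
      exact mul_le_mul_of_nonneg_right (hHC w) (Real.exp_pos _).le
    have hbd : ∀ w : ℂ, ‖g w‖ ≤ C * Real.exp (δ ^ 2 / (4 * γ)) := by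
      intro w
      refine (hbd2 w).trans ?_
      apply mul_le_mul_of_nonneg_left _ hC0
      apply Real.exp_le_exp.mpr
      have hγ0 : γ ≠ 0 := ne_of_gt hγ
      have hexp2 : γ * (w.im + δ / (2 * γ)) ^ 2 = γ * w.im ^ 2 + δ * w.im + δ ^ 2 / (4 * γ) := by
        field_simp; ring
      have h0 : 0 ≤ γ * (w.im + δ / (2 * γ)) ^ 2 := mul_nonneg hγ.le (sq_nonneg _)
      rw [hexp2] at h0
      linarith
    have hbnd : Bornology.IsBounded (Set.range g) := by
      rw [isBounded_iff_forall_norm_le]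
      refine ⟨C * Real.exp (δ ^ 2 / (4 * γ)), ?_⟩
      rintro _ ⟨w, rfl⟩
      exact hbd w
    have hconst := hg.apply_eq_apply_of_bounded hbnd
    have hg0 : g 0 = φ (τ, z₀) := by
      rw [hgdef]; simp
    have hub : ∀ s : ℝ, ‖φ (τ, z₀)‖ ≤ C * Real.exp (-(γ * s ^ 2 + δ * s)) := by
      intro s
      have h1 : g 0 = g ((s : ℂ) * Complex.I) := hconst 0 _
      have h2 := hbd2 ((s : ℂ) * Complex.I)
      have h3 : ((s : ℂ) * Complex.I).im = s := by simp
      rw [h3] at h2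
      rw [← hg0, h1]
      exact h2
    have hlim : Tendsto (fun s : ℝ => C * Real.exp (-(γ * s ^ 2 + δ * s))) atTop (nhds 0) := by
      have h1 : Tendsto (fun s : ℝ => γ * s ^ 2 + δ * s) atTop atTop := by
        have he : (fun s : ℝ => γ * s ^ 2 + δ * s) = fun s : ℝ => s * (γ * s + δ) := by
          funext s; ring
        rw [he]
        exact tendsto_id.atTop_mul_atTop₀
          (tendsto_atTop_add_const_right _ δ (Tendsto.const_mul_atTop hγ tendsto_id))
      have h2 : Tendsto (fun s : ℝ => Real.exp (-(γ * s ^ 2 + δ * s))) atTop (nhds 0) :=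
        Real.tendsto_exp_atBot.comp (tendsto_neg_atTop_atBot.comp h1)
      simpa using h2.const_mul C
    have hfinal : ‖φ (τ, z₀)‖ ≤ 0 := ge_of_tendsto' hlim hub
    exact hφ (norm_eq_zero.mp (le_antisymm hfinal (norm_nonneg _)))
  -- Step 2: density
  intro v
  set Gr : Matrix (Fin n) (Fin n) ℝ := G.map (Int.cast : ℤ → ℝ) with hGrdef
  have hFcont : Continuous (fun w : Fin n → ℝ => w ⬝ᵥ Gr.mulVec w) := by
    simp only [dotProduct, Matrix.mulVec]
    exact continuous_finset_sum _ fun i _ => (continuous_apply i).mul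
      (continuous_finset_sum _ fun j _ => continuous_const.mul (continuous_apply j))
  set u : ℕ → Fin n → ℝ :=
    fun N i => ((N : ℝ) + 1)⁻¹ * ((⌊v i * ((N : ℝ) + 1)⌋ : ℤ) : ℝ) with hudef
  have htend : Tendsto u atTop (nhds v) := by
    rw [tendsto_pi_nhds]
    intro i
    have hlow : ∀ N : ℕ, v i - ((N : ℝ) + 1)⁻¹ ≤ u N i := by
      intro N
      have hN : (0:ℝ) < (N : ℝ) + 1 := by positivity
      have hfl := Int.sub_one_lt_floor (v i * ((N : ℝ) + 1))
      show v i - ((N : ℝ) + 1)⁻¹ ≤ ((N : ℝ) + 1)⁻¹ * ((⌊v i * ((N : ℝ) + 1)⌋ : ℤ) : ℝ)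
      have h2 : (v i * ((N : ℝ) + 1) - 1) * ((N : ℝ) + 1)⁻¹ ≤
          ((⌊v i * ((N : ℝ) + 1)⌋ : ℤ) : ℝ) * ((N : ℝ) + 1)⁻¹ :=
        mul_le_mul_of_nonneg_right (le_of_lt hfl) (by positivity)
      calc v i - ((N : ℝ) + 1)⁻¹ = (v i * ((N : ℝ) + 1) - 1) * ((N : ℝ) + 1)⁻¹ := by
            field_simp
        _ ≤ ((⌊v i * ((N : ℝ) + 1)⌋ : ℤ) : ℝ) * ((N : ℝ) + 1)⁻¹ := h2
        _ = ((N : ℝ) + 1)⁻¹ * ((⌊v i * ((N : ℝ) + 1)⌋ : ℤ) : ℝ) := by ring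
    have hupp : ∀ N : ℕ, u N i ≤ v i := by
      intro N
      have hN : (0:ℝ) < (N : ℝ) + 1 := by positivity
      have hfl := Int.floor_le (v i * ((N : ℝ) + 1))
      show ((N : ℝ) + 1)⁻¹ * ((⌊v i * ((N : ℝ) + 1)⌋ : ℤ) : ℝ) ≤ v i
      calc ((N : ℝ) + 1)⁻¹ * ((⌊v i * ((N : ℝ) + 1)⌋ : ℤ) : ℝ)
          ≤ ((N : ℝ) + 1)⁻¹ * (v i * ((N : ℝ) + 1)) :=
            mul_le_mul_of_nonneg_left hfl (by positivity)
        _ = v i := by field_simp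
    have hlim1 : Tendsto (fun N : ℕ => v i - ((N : ℝ) + 1)⁻¹) atTop (nhds (v i)) := by
      have : Tendsto (fun N : ℕ => ((N : ℝ) + 1)⁻¹) atTop (nhds 0) := by
        simpa only [one_div] using tendsto_one_div_add_atTop_nhds_zero_nat (𝕜 := ℝ)
      simpa using (tendsto_const_nhds (x := v i)).sub this
    exact tendsto_of_tendsto_of_tendsto_of_le_of_le hlim1 tendsto_const_nhds hlow hupp
  have hnonneg : ∀ N : ℕ, 0 ≤ u N ⬝ᵥ Gr.mulVec (u N) := by
    intro N
    have he : u N = ((N : ℝ) + 1)⁻¹ •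
        (fun i => ((⌊v i * ((N : ℝ) + 1)⌋ : ℤ) : ℝ)) := rfl
    rw [he, Matrix.mulVec_smul, dotProduct_smul, smul_dotProduct,
      smul_eq_mul, smul_eq_mul, quad_cast_R]
    have := key (fun i => ⌊v i * ((N : ℝ) + 1)⌋)
    have hc : (0:ℝ) ≤ (((fun i => ⌊v i * ((N : ℝ) + 1)⌋) ⬝ᵥ
        G.mulVec (fun i => ⌊v i * ((N : ℝ) + 1)⌋) : ℤ) : ℝ) := by exact_mod_cast this
    positivity
  have : Tendsto (fun N : ℕ => u N ⬝ᵥ Gr.mulVec (u N)) atTop (nhds (v ⬝ᵥ Gr.mulVec v)) :=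
    (hFcont.tendsto v).comp htend
  exact ge_of_tendsto' this hnonneg
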